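/- If I is a critical independent set of a graph G with |I| = |N(I)| and the graph G - I - N(I) contains a nice even subdivision of T, then G is not Egerváry; conversely if G - I - N(I) is Egerváry (and G has a perfect matching with I matched to N(I)), then G is Egerváry. -/

import Mathlib

open SimpleGraph

variable {V : Type*}

/-- A graph has a perfect matching. -/
def HasPM (G : SimpleGraph V) : Prop := ∃ M : G.Subgraph, M.IsPerfectMatching

/-- A set of vertices is independent (pairwise nonadjacent). -/
def IsIndep (G : SimpleGraph V) (s : Set V) : Prop := ∀ x ∈ s, ∀ y ∈ s, ¬ G.Adj x y

/-- The independence number. -/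
noncomputable def alphaNum (G : SimpleGraph V) : ℕ :=
  sSup {n | ∃ s : Set V, IsIndep G s ∧ s.ncard = n}

/-- The matching number. -/
noncomputable def matchNum (G : SimpleGraph V) : ℕ :=
  sSup {n | ∃ M : G.Subgraph, M.IsMatching ∧ M.edgeSet.ncard = n}

/-- A graph is König-Egerváry if α + ν = n. -/
def IsKE (G : SimpleGraph V) : Prop := alphaNum G + matchNum G = Nat.card V

/-- `G` is (the whole graph) an even subdivision of `K₄`: four corner vertices and six
internally disjoint odd paths joining each pair of corners, comprising all vertices
and edges of `G`. -/
def IsEvenSubdivK4 (G : SimpleGraph V) : Prop :=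
  ∃ (c : Fin 4 → V) (P : ∀ i j : Fin 4, G.Walk (c i) (c j)),
    Function.Injective c ∧
    (∀ i j : Fin 4, P j i = (P i j).reverse) ∧
    (∀ i j : Fin 4, i ≠ j → (P i j).IsPath ∧ Odd (P i j).length) ∧
    (∀ i j k l : Fin 4, i ≠ j → k ≠ l → ¬(i = k ∧ j = l) → ¬(i = l ∧ j = k) →
      ∀ x : V, x ∈ (P i j).support → x ∈ (P k l).support → x ∈ Set.range c) ∧
    (∀ x : V, ∃ i j : Fin 4, i ≠ j ∧ x ∈ (P i j).support) ∧
    (∀ e : Sym2 V, e ∈ G.edgeSet ↔ ∃ i j : Fin 4, i ≠ j ∧ e ∈ (P i j).edges)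

/-- `G` is (the whole graph) an even subdivision of `T`: two vertex-disjoint odd cycles
joined at blossom tips `v`, `w` by an odd path internally disjoint from the cycles,
comprising all vertices and edges of `G`. -/
def IsEvenSubdivT (G : SimpleGraph V) : Prop :=
  ∃ (v w : V) (C1 : G.Walk v v) (C2 : G.Walk w w) (P : G.Walk v w),
    C1.IsCycle ∧ C2.IsCycle ∧ Odd C1.length ∧ Odd C2.length ∧
    P.IsPath ∧ Odd P.length ∧
    (∀ x : V, x ∈ C1.support → x ∉ C2.support) ∧
    (∀ x : V, x ∈ P.support → x ∈ C1.support → x = v) ∧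
    (∀ x : V, x ∈ P.support → x ∈ C2.support → x = w) ∧
    (∀ x : V, x ∈ C1.support ∨ x ∈ C2.support ∨ x ∈ P.support) ∧
    (∀ e : Sym2 V, e ∈ G.edgeSet ↔ e ∈ C1.edges ∨ e ∈ C2.edges ∨ e ∈ P.edges)

/-- `G` contains a nice even subdivision of `T`: a subgraph `H` which is an even
subdivision of `T` and such that `G - V(H)` has a perfect matching. -/
def HasNiceEvenSubdivT (G : SimpleGraph V) : Prop :=
  ∃ H : G.Subgraph, IsEvenSubdivT H.coe ∧ HasPM (G.induce (H.vertsᶜ))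

/-- `G` has a spanning subgraph whose components are independent edges together with a
positive number of vertex-disjoint odd cycles. -/
def HasOddCycleCover (G : SimpleGraph V) : Prop :=
  ∃ (M : G.Subgraph) (k : ℕ) (u : Fin k → V) (C : ∀ i : Fin k, G.Walk (u i) (u i)),
    0 < k ∧ M.IsMatching ∧
    (∀ i, (C i).IsCycle ∧ Odd (C i).length) ∧
    (∀ i j, i ≠ j → ∀ x : V, x ∈ (C i).support → x ∉ (C j).support) ∧
    (∀ i, ∀ x ∈ (C i).support, x ∉ M.verts) ∧
    (∀ x : V, x ∈ M.verts ∨ ∃ i, x ∈ (C i).support)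

/-- A matchable graph is Egerváry iff it has no such spanning cover. -/
def IsEgervary (G : SimpleGraph V) : Prop := ¬ HasOddCycleCover G

/-- `G` contains two vertex-disjoint odd cycles. -/
def TwoDisjointOddCycles (G : SimpleGraph V) : Prop :=
  ∃ (a b : V) (C1 : G.Walk a a) (C2 : G.Walk b b),
    C1.IsCycle ∧ C2.IsCycle ∧ Odd C1.length ∧ Odd C2.length ∧
    ∀ x : V, x ∈ C1.support → x ∉ C2.support

/-- `G` is α-critical: deleting any edge increases the independence number. -/
def AlphaCritical (G : SimpleGraph V) : Prop :=
  ∀ e ∈ G.edgeSet, alphaNum (G.deleteEdges {e}) = alphaNum G + 1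

/-- The (open) neighborhood of a set of vertices. -/
def setN (G : SimpleGraph V) (I : Set V) : Set V := {x | x ∉ I ∧ ∃ y ∈ I, G.Adj x y}


/-! ### Auxiliary machinery -/

section Aux

variable {G : SimpleGraph V}

/-- The inclusion hom from an induced subgraph. -/
def embS (G : SimpleGraph V) (S : Set V) : G.induce S →g G where
  toFun := Subtype.val
  map_rel' := fun h => h

@[simp] lemma embS_apply {S : Set V} (x : ↥S) : embS G S x = ↑x := rfl

lemma embS_inj (S : Set V) : Function.Injective (embS G S) := Subtype.val_injective

lemma nbrs_empty_of_not_mem_support {a b x : V} {p : G.Walk a b} (hx : x ∉ p.support) :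
    p.toSubgraph.neighborSet x = ∅ := by
  ext y
  simp only [Set.mem_empty_iff_false, iff_false, SimpleGraph.Subgraph.mem_neighborSet]
  intro h
  exact hx (by simpa [SimpleGraph.Walk.verts_toSubgraph] using h.fst_mem)

lemma path_start_nbrs {a c b : V} (h : G.Adj a c) (r : G.Walk c b)
    (hp : (SimpleGraph.Walk.cons h r).IsPath) :
    (SimpleGraph.Walk.cons h r).toSubgraph.neighborSet a = {c} := by
  classical
  have ha : a ∉ r.support := ((SimpleGraph.Walk.cons_isPath_iff h r).mp hp).2
  rw [SimpleGraph.Walk.toSubgraph, SimpleGraph.Subgraph.neighborSet_sup,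
    nbrs_empty_of_not_mem_support ha, SimpleGraph.neighborSet_fst_subgraphOfAdj]
  simp [h.ne, h.ne']

lemma cycle_start_nbrs {u : V} {c : G.Walk u u} (hc : c.IsCycle) :
    (c.toSubgraph.neighborSet u).ncard = 2 := by
  classical
  cases c with
  | nil => exact absurd rfl hc.ne_nil
  | @cons _ v _ h q =>
    obtain ⟨hq, he⟩ := (SimpleGraph.Walk.cons_isCycle_iff q h).mp hc
    have hqn : ¬ q.reverse.Nil := by
      intro hnil
      have hlen : q.length = 0 := by
        have := SimpleGraph.Walk.nil_iff_length_eq.mp hnil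
        simpa using this
      have := hc.three_le_length
      simp [hlen] at this
    obtain ⟨c', h', r, hrev⟩ := SimpleGraph.Walk.not_nil_iff.mp hqn
    have hnbrs : (SimpleGraph.Walk.cons h q).toSubgraph.neighborSet u = {v, c'} := by
      rw [SimpleGraph.Walk.toSubgraph, SimpleGraph.Subgraph.neighborSet_sup,
        ← SimpleGraph.Walk.toSubgraph_reverse q, hrev, path_start_nbrs h' r (by
          rw [← hrev]; exact hq.reverse),
        SimpleGraph.neighborSet_fst_subgraphOfAdj]
      ext y; simp [Set.mem_insert_iff]; tauto
    rw [hnbrs]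
    refine Set.ncard_pair ?_
    intro hvc
    apply he
    subst hvc
    have : s(u, v) ∈ q.reverse.edges := by
      rw [hrev]; simp
    rwa [SimpleGraph.Walk.edges_reverse, List.mem_reverse] at this

lemma cycle_nbrs_ncard {u x : V} {c : G.Walk u u} (hc : c.IsCycle) (hx : x ∈ c.support) :
    (c.toSubgraph.neighborSet x).ncard = 2 := by
  classical
  rw [← SimpleGraph.Walk.toSubgraph_rotate c hx]
  exact cycle_start_nbrs (hc.rotate hx)

lemma internal_matching : ∀ {u w : V} (p : G.Walk u w), p.IsPath → Odd p.length →
    ∃ M : G.Subgraph, M.IsMatching ∧ M.verts = {x | x ∈ p.support ∧ x ≠ u ∧ x ≠ w}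
  | u, _, .nil, hp, ho => by simp [Nat.odd_iff] at ho
  | u, _, .cons h .nil, hp, ho => by
      refine ⟨⊥, fun v hv => by simp at hv, ?_⟩
      ext x
      simp only [SimpleGraph.Subgraph.verts_bot, Set.mem_empty_iff_false, Set.mem_setOf_eq,
        SimpleGraph.Walk.support_cons, SimpleGraph.Walk.support_nil, List.mem_cons,
        List.mem_singleton, false_iff]
      rintro ⟨hx1 | hx2, hxu, hxw⟩
      · exact hxu hx1
      · simp at hx2; exact hxw hx2
  | u, w, .cons (v := c) h (.cons (v := d) h2 q), hp, ho => by
      have hp1 : (SimpleGraph.Walk.cons h2 q).IsPath := hp.of_cons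
      have hq : q.IsPath := hp1.of_cons
      have hcq : c ∉ q.support := ((SimpleGraph.Walk.cons_isPath_iff h2 q).mp hp1).2
      have huq : u ∉ (SimpleGraph.Walk.cons h2 q).support :=
        ((SimpleGraph.Walk.cons_isPath_iff h _).mp hp).2
      have huq' : u ∉ q.support := by
        intro hu; exact huq (by simp [SimpleGraph.Walk.support_cons, hu])
      have hoq : Odd q.length := by
        simp only [SimpleGraph.Walk.length_cons, Nat.odd_iff] at ho ⊢; omega
      have hqnn : ¬ q.Nil := by
        intro hnil
        have := SimpleGraph.Walk.nil_iff_length_eq.mp hnil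
        simp [this, Nat.odd_iff] at hoq
      have hdw : d ≠ w := by
        rintro rfl
        have : q.support.Nodup := hq.support_nodup
        cases q with
        | nil => exact hqnn SimpleGraph.Walk.nil_nil
        | cons h3 r =>
          simp only [SimpleGraph.Walk.support_cons, List.nodup_cons] at this
          exact this.1 (SimpleGraph.Walk.end_mem_support r)
      have hdu : d ≠ u := by
        intro hde
        exact huq (hde ▸ (by
          simp [SimpleGraph.Walk.support_cons, SimpleGraph.Walk.start_mem_support q] :
          d ∈ (SimpleGraph.Walk.cons h2 q).support))
      have hcw : c ≠ w := fun hcweq => hcq (hcweq ▸ SimpleGraph.Walk.end_mem_support q)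
      obtain ⟨M', hM', hverts⟩ := internal_matching q hq hoq
      have hdisj : Disjoint (G.subgraphOfAdj h2).support M'.support := by
        rw [hM'.support_eq_verts, hverts, Set.disjoint_left]
        intro x hx hx2
        have : x ∈ ({c, d} : Set V) :=
          (G.subgraphOfAdj h2).support_subset_verts hx
        rcases this with rfl | rfl
        · exact hcq hx2.1
        · exact hx2.2.1 rfl
      refine ⟨G.subgraphOfAdj h2 ⊔ M',
        (SimpleGraph.Subgraph.IsMatching.subgraphOfAdj h2).sup hM' hdisj, ?_⟩
      ext x
      simp only [SimpleGraph.Subgraph.verts_sup, SimpleGraph.subgraphOfAdj_verts, hverts,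
        Set.mem_union, Set.mem_insert_iff, Set.mem_singleton_iff, Set.mem_setOf_eq,
        SimpleGraph.Walk.support_cons, List.mem_cons]
      constructor
      · rintro ((rfl | rfl) | ⟨hxq, hxd, hxw⟩)
        · exact ⟨Or.inr (Or.inl rfl), h.ne', hcw⟩
        · exact ⟨Or.inr (Or.inr (SimpleGraph.Walk.start_mem_support q)), hdu, hdw⟩
        · exact ⟨Or.inr (Or.inr hxq), fun h => huq' (h ▸ hxq), hxw⟩
      · rintro ⟨(rfl | rfl | hxq), hxu, hxw⟩
        · exact absurd rfl hxu
        · exact Or.inl (Or.inl rfl)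
        · by_cases hxd : x = d
          · exact Or.inl (Or.inr hxd)
          · exact Or.inr ⟨hxq, hxd, hxw⟩

def liftW {S : Set V} : ∀ {a b : V} (p : G.Walk a b) (hp : ∀ x ∈ p.support, x ∈ S),
    (G.induce S).Walk ⟨a, hp a p.start_mem_support⟩ ⟨b, hp b p.end_mem_support⟩
  | _, _, .nil, _ => SimpleGraph.Walk.nil
  | _, _, .cons h q, hp =>
      SimpleGraph.Walk.cons (by exact h)
        (liftW q (fun x hx => hp x (by simp [SimpleGraph.Walk.support_cons, hx])))

lemma liftW_map {S : Set V} : ∀ {a b : V} (p : G.Walk a b) (hp : ∀ x ∈ p.support, x ∈ S),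
    (liftW p hp).map (embS G S) = p
  | _, _, .nil, _ => rfl
  | _, _, .cons h q, hp => by
      rw [liftW]; exact congrArg (SimpleGraph.Walk.cons h) (liftW_map q _)

lemma liftW_support {S : Set V} {a b : V} (p : G.Walk a b) (hp : ∀ x ∈ p.support, x ∈ S)
    (x : ↥S) : x ∈ (liftW p hp).support ↔ ↑x ∈ p.support := by
  have key := congrArg SimpleGraph.Walk.support (liftW_map p hp)
  rw [SimpleGraph.Walk.support_map] at key
  have h2 : x ∈ (liftW p hp).support ↔ embS G S x ∈ List.map (embS G S) (liftW p hp).support :=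
    (List.mem_map_of_injective (embS_inj S)).symm
  rw [key] at h2
  exact h2

lemma liftW_length {S : Set V} {a b : V} (p : G.Walk a b) (hp : ∀ x ∈ p.support, x ∈ S) :
    (liftW p hp).length = p.length := by
  have key := congrArg SimpleGraph.Walk.length (liftW_map p hp)
  rw [SimpleGraph.Walk.length_map] at key
  exact key

lemma liftW_isCycle {S : Set V} {a : V} (p : G.Walk a a) (hp : ∀ x ∈ p.support, x ∈ S)
    (hc : p.IsCycle) : (liftW p hp).IsCycle := by
  rw [← liftW_map p hp] at hc
  exact (SimpleGraph.Walk.map_isCycle_iff_of_injective (embS_inj S)).mp hc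

lemma hall_matching [Fintype V] (G : SimpleGraph V) (I : Set V) (hind : IsIndep G I)
    (hcrit : ∀ J : Set V, IsIndep G J →
      ((setN G I).ncard : ℤ) - I.ncard ≤ ((setN G J).ncard : ℤ) - J.ncard)
    (hcard : I.ncard = (setN G I).ncard) :
    ∃ M : G.Subgraph, M.IsMatching ∧ M.verts = I ∪ setN G I := by
  classical
  let t : ↥I → Finset V := fun x => Finset.univ.filter (fun y => G.Adj ↑x y)
  have hall : ∀ s : Finset ↥I, s.card ≤ (s.biUnion t).card := by
    intro s
    set J : Set V := Subtype.val '' (↑s : Set ↥I) with hJ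
    have hJI : J ⊆ I := by rintro _ ⟨⟨x, hx⟩, _, rfl⟩; exact hx
    have hJind : IsIndep G J := fun x hx y hy => hind x (hJI hx) y (hJI hy)
    have h1 := hcrit J hJind
    have h0 : ((setN G I).ncard : ℤ) - I.ncard = 0 := by rw [hcard]; ring
    have h2 : (J.ncard : ℤ) ≤ (setN G J).ncard := by omega
    have hsub : setN G J ⊆ ↑(s.biUnion t) := by
      rintro y ⟨hyJ, x, hxJ, hadj⟩
      obtain ⟨x', hx's, rfl⟩ := hxJ
      refine Finset.mem_coe.mpr (Finset.mem_biUnion.mpr ⟨x', hx's, ?_⟩)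
      simp only [t, Finset.mem_filter, Finset.mem_univ, true_and]
      exact hadj.symm
    have h3 : (setN G J).ncard ≤ (s.biUnion t).card := by
      rw [← Set.ncard_coe_finset]
      exact Set.ncard_le_ncard hsub (Finset.finite_toSet _)
    have h4 : J.ncard = s.card := by
      rw [hJ, Set.ncard_image_of_injective _ Subtype.val_injective, Set.ncard_coe_finset]
    omega
  obtain ⟨f, hfinj, hft⟩ := (Finset.all_card_le_biUnion_card_iff_exists_injective t).mp hall
  have hadj : ∀ x : ↥I, G.Adj ↑x (f x) := by
    intro x
    have := hft x
    simpa [t] using this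
  have hfN : ∀ x : ↥I, f x ∈ setN G I := fun x =>
    ⟨fun hfI => hind (f x) hfI ↑x x.2 ((hadj x).symm), ⟨↑x, x.2, (hadj x).symm⟩⟩
  let F : ↥I → ↥(setN G I) := fun x => ⟨f x, hfN x⟩
  have hFinj : Function.Injective F := fun a b hab => hfinj (congrArg Subtype.val hab)
  have hcards : Fintype.card ↥I = Fintype.card ↥(setN G I) := by
    rw [← Nat.card_eq_fintype_card, ← Nat.card_eq_fintype_card,
      Nat.card_coe_set_eq, Nat.card_coe_set_eq]
    exact hcard
  have hFbij := (Fintype.bijective_iff_injective_and_card F).mpr ⟨hFinj, hcards⟩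
  have hdisj : Disjoint I (setN G I) := by
    rw [Set.disjoint_left]
    intro x hxI hxN
    exact hxN.1 hxI
  obtain ⟨M, hMv, hMm⟩ := Subgraph.IsMatching.exists_of_disjoint_sets_of_equiv hdisj
    (Equiv.ofBijective F hFbij) (fun v => hadj v)
  exact ⟨M, hMm, hMv⟩

lemma length_rotate [DecidableEq V] {u x : V} (c : G.Walk u u) (h : x ∈ c.support) :
    (c.rotate x h).length = c.length := by
  have hspec := congrArg SimpleGraph.Walk.length (c.take_spec h)
  rw [SimpleGraph.Walk.length_append] at hspec
  show ((c.dropUntil x h).append (c.takeUntil x h)).length = c.length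
  rw [SimpleGraph.Walk.length_append]
  omega

lemma mem_support_rotate [DecidableEq V] {u x y : V} (c : G.Walk u u) (h : x ∈ c.support)
    (hy : y ∈ (c.rotate x h).support) : y ∈ c.support := by
  rw [SimpleGraph.Walk.support_eq_cons (c.rotate x h), List.mem_cons] at hy
  rcases hy with rfl | hy'
  · exact h
  · have hrot := SimpleGraph.Walk.support_rotate c x h
    have := hrot.mem_iff.mp hy'
    rw [SimpleGraph.Walk.support_eq_cons c]
    exact List.mem_cons_of_mem _ this

end Aux

section Parts

lemma part_one {V : Type*} [Fintype V] (G : SimpleGraph V) (I : Set V)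
    (hind : IsIndep G I)
    (hcrit : ∀ J : Set V, IsIndep G J →
      ((setN G I).ncard : ℤ) - I.ncard ≤ ((setN G J).ncard : ℤ) - J.ncard)
    (hcard : I.ncard = (setN G I).ncard)
    (hT : HasNiceEvenSubdivT (G.induce ((I ∪ setN G I)ᶜ))) :
    HasOddCycleCover G := by
  classical
  set S : Set V := (I ∪ setN G I)ᶜ with hS
  obtain ⟨H, hHsub, hHpm⟩ := hT
  obtain ⟨v, w, C1, C2, P, hc1, hc2, ho1, ho2, hPp, hPo, hdisjC, hPC1, hPC2, hcov, hedges⟩ :=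
    hHsub
  -- the composite embedding of H.coe into G
  set φ : H.coe →g G := (embS G S).comp H.hom with hφ
  have hφval : ∀ y : ↥H.verts, φ y = ((y : ↥S) : V) := fun _ => rfl
  have hφinj : Function.Injective φ := by
    intro a b hab
    exact Subtype.ext (Subtype.ext hab)
  have hφS : ∀ y : ↥H.verts, (φ y : V) ∈ S := fun y => (y : ↥S).2
  have hφH : ∀ (y : ↥H.verts) (hx : (φ y : V) ∈ S), (⟨φ y, hx⟩ : ↥S) ∈ H.verts := by
    intro y hx
    have : (⟨φ y, hx⟩ : ↥S) = (y : ↥S) := Subtype.ext rfl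
    rw [this]; exact y.2
  -- mapped cycles and path
  set D1 : G.Walk (φ v) (φ v) := C1.map φ with hD1
  set D2 : G.Walk (φ w) (φ w) := C2.map φ with hD2
  set D3 : G.Walk (φ v) (φ w) := P.map φ with hD3
  have hD1c : D1.IsCycle := (SimpleGraph.Walk.map_isCycle_iff_of_injective hφinj).mpr hc1
  have hD2c : D2.IsCycle := (SimpleGraph.Walk.map_isCycle_iff_of_injective hφinj).mpr hc2
  have hD1o : Odd D1.length := by rwa [hD1, SimpleGraph.Walk.length_map]
  have hD2o : Odd D2.length := by rwa [hD2, SimpleGraph.Walk.length_map]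
  have hD3p : D3.IsPath := (SimpleGraph.Walk.map_isPath_iff_of_injective hφinj).mpr hPp
  have hD3o : Odd D3.length := by rwa [hD3, SimpleGraph.Walk.length_map]
  -- the three matchings
  obtain ⟨Mh, hMhm, hMhv⟩ := hall_matching G I hind hcrit hcard
  obtain ⟨M2, hM2⟩ := hHpm
  set ψ : ((G.induce S).induce H.vertsᶜ) →g G :=
    (embS G S).comp (embS (G.induce S) H.vertsᶜ) with hψ
  have hψinj : Function.Injective ψ := fun a b hab => Subtype.ext (Subtype.ext hab)
  set M2G : G.Subgraph := M2.map ψ with hM2G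
  have hM2Gm : M2G.IsMatching := hM2.1.map ψ hψinj
  have hM2Gv : ∀ x : V, x ∈ M2G.verts ↔ ∃ hx : x ∈ S, (⟨x, hx⟩ : ↥S) ∉ H.verts := by
    intro x
    rw [hM2G, SimpleGraph.Subgraph.map_verts]
    constructor
    · rintro ⟨y, -, rfl⟩
      exact ⟨((y : ↥(H.vertsᶜ)) : ↥S).2, by
        have : (⟨ψ y, ((y : ↥(H.vertsᶜ)) : ↥S).2⟩ : ↥S) = ((y : ↥(H.vertsᶜ)) : ↥S) :=
          Subtype.ext rfl
        rw [this]; exact (y : ↥(H.vertsᶜ)).2⟩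
    · rintro ⟨hx, hH⟩
      exact ⟨⟨⟨x, hx⟩, hH⟩, hM2.2 _, rfl⟩
  obtain ⟨Mp, hMpm, hMpv⟩ := internal_matching D3 hD3p hD3o
  -- membership facts about cycle/path supports
  have hsupD : ∀ {x : V} {y : ↥H.verts}, φ y = x → ∀ (hx : x ∈ S), (⟨x, hx⟩ : ↥S) ∈ H.verts := by
    rintro x y rfl hx
    exact hφH y hx
  -- assemble
  set M23 : G.Subgraph := M2G ⊔ Mp with hM23
  have hdisj23 : Disjoint M2G.support Mp.support := by
    rw [hM2Gm.support_eq_verts, hMpm.support_eq_verts, hMpv, Set.disjoint_left]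
    intro x hx1 hx2
    obtain ⟨hxS, hxnH⟩ := (hM2Gv x).mp hx1
    obtain ⟨y, hyP, rfl⟩ := by
      have := hx2.1
      rw [hD3, SimpleGraph.Walk.support_map] at this
      exact List.mem_map.mp this
    exact hxnH (hsupD rfl hxS)
  have hM23m : M23.IsMatching := hM2Gm.sup hMpm hdisj23
  have hM23sub : M23.verts ⊆ S := by
    rw [hM23, SimpleGraph.Subgraph.verts_sup]
    rintro x (hx | hx)
    · exact ((hM2Gv x).mp hx).1
    · rw [hMpv] at hx
      obtain ⟨y, hyP, rfl⟩ := by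
        have := hx.1
        rw [hD3, SimpleGraph.Walk.support_map] at this
        exact List.mem_map.mp this
      exact hφS y
  have hdisjh : Disjoint Mh.support M23.support := by
    rw [hMhm.support_eq_verts, hM23m.support_eq_verts, hMhv, Set.disjoint_left]
    intro x hx1 hx2
    exact (hM23sub hx2) hx1
  set M : G.Subgraph := Mh ⊔ M23 with hM
  have hMm : M.IsMatching := hMhm.sup hM23m hdisjh
  -- the two cycles
  set u2 : Fin 2 → V := fun i => match i with | 0 => φ v | 1 => φ w with hu2
  set Cs : ∀ i : Fin 2, G.Walk (u2 i) (u2 i) :=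
    fun i => match i with | 0 => D1 | 1 => D2 with hCs
  -- support membership transfer
  have hsup1 : ∀ {x : V}, x ∈ D1.support ↔ ∃ y : ↥H.verts, y ∈ C1.support ∧ φ y = x := by
    intro x
    rw [hD1, SimpleGraph.Walk.support_map]
    simp [List.mem_map]
  have hsup2 : ∀ {x : V}, x ∈ D2.support ↔ ∃ y : ↥H.verts, y ∈ C2.support ∧ φ y = x := by
    intro x
    rw [hD2, SimpleGraph.Walk.support_map]
    simp [List.mem_map]
  have hsup3 : ∀ {x : V}, x ∈ D3.support ↔ ∃ y : ↥H.verts, y ∈ P.support ∧ φ y = x := by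
    intro x
    rw [hD3, SimpleGraph.Walk.support_map]
    simp [List.mem_map]
  -- cycle supports avoid M
  have hcycM : ∀ (x : V), (x ∈ D1.support ∨ x ∈ D2.support) → x ∉ M.verts := by
    rintro x hx hxM
    have hex : ∃ y : ↥H.verts, φ y = x := by
      rcases hx with hx | hx
      · obtain ⟨y, -, hyx⟩ := hsup1.mp hx
        exact ⟨y, hyx⟩
      · obtain ⟨y, -, hyx⟩ := hsup2.mp hx
        exact ⟨y, hyx⟩
    obtain ⟨y, rfl⟩ := hex
    rw [hM, SimpleGraph.Subgraph.verts_sup] at hxM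
    rcases hxM with hxM | hxM
    · rw [hMhv] at hxM
      exact (hφS y) hxM
    · rw [hM23, SimpleGraph.Subgraph.verts_sup] at hxM
      rcases hxM with hxM | hxM
      · obtain ⟨hxS, hxnH⟩ := (hM2Gv _).mp hxM
        exact hxnH (hφH y hxS)
      · rw [hMpv] at hxM
        obtain ⟨hxP, hxv, hxw⟩ := hxM
        obtain ⟨z, hzP, hzx⟩ := hsup3.mp hxP
        have hyz : y = z := hφinj hzx.symm
        rcases hx with hx | hx
        · obtain ⟨y', hy', hy'x⟩ := hsup1.mp hx
          have : z = v := hPC1 z hzP (by rwa [hφinj (hy'x.trans hzx.symm)] at hy')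
          exact hxv (by rw [← hzx, this])
        · obtain ⟨y', hy', hy'x⟩ := hsup2.mp hx
          have : z = w := hPC2 z hzP (by rwa [hφinj (hy'x.trans hzx.symm)] at hy')
          exact hxw (by rw [← hzx, this])
  refine ⟨M, 2, u2, Cs, by norm_num, hMm, ?_, ?_, ?_, ?_⟩
  · intro i
    fin_cases i
    · exact ⟨hD1c, hD1o⟩
    · exact ⟨hD2c, hD2o⟩
  · intro i j hij x hxi hxj
    have key : ∀ x : V, x ∈ D1.support → x ∉ D2.support := by
      intro x hx1 hx2
      obtain ⟨y1, hy1, rfl⟩ := hsup1.mp hx1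
      obtain ⟨y2, hy2, hy2x⟩ := hsup2.mp hx2
      rw [hφinj hy2x] at hy2
      exact hdisjC y1 hy1 hy2
    fin_cases i <;> fin_cases j
    · exact absurd rfl hij
    · exact key x hxi hxj
    · exact key x hxj hxi
    · exact absurd rfl hij
  · intro i x hx
    fin_cases i
    · exact hcycM x (Or.inl hx)
    · exact hcycM x (Or.inr hx)
  · intro x
    by_cases hxS : x ∈ S
    · by_cases hxH : (⟨x, hxS⟩ : ↥S) ∈ H.verts
      · set y : ↥H.verts := ⟨⟨x, hxS⟩, hxH⟩ with hy
        have hyx : φ y = x := rfl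
        rcases hcov y with hyc | hyc | hyc
        · exact Or.inr ⟨0, hsup1.mpr ⟨y, hyc, hyx⟩⟩
        · exact Or.inr ⟨1, hsup2.mpr ⟨y, hyc, hyx⟩⟩
        · by_cases hyv : y = v
          · exact Or.inr ⟨0, hsup1.mpr ⟨y, by rw [hyv]; exact C1.start_mem_support, hyx⟩⟩
          · by_cases hyw : y = w
            · exact Or.inr ⟨1, hsup2.mpr ⟨y, by rw [hyw]; exact C2.start_mem_support, hyx⟩⟩
            · left
              rw [hM, SimpleGraph.Subgraph.verts_sup, hM23, SimpleGraph.Subgraph.verts_sup]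
              refine Or.inr (Or.inr ?_)
              rw [hMpv]
              refine ⟨hsup3.mpr ⟨y, hyc, hyx⟩, ?_, ?_⟩
              · intro hxv
                exact hyv (hφinj (hyx.trans hxv))
              · intro hxw
                exact hyw (hφinj (hyx.trans hxw))
      · left
        rw [hM, SimpleGraph.Subgraph.verts_sup, hM23, SimpleGraph.Subgraph.verts_sup]
        exact Or.inr (Or.inl ((hM2Gv x).mpr ⟨hxS, hxH⟩))
    · left
      rw [hM, SimpleGraph.Subgraph.verts_sup, hMhv]
      left
      exact Set.notMem_compl_iff.mp hxS

set_option maxHeartbeats 2000000 in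
lemma part_two {V : Type*} [Fintype V] (G : SimpleGraph V) (I : Set V)
    (hind : IsIndep G I)
    (hcard : I.ncard = (setN G I).ncard)
    (hEg : IsEgervary (G.induce ((I ∪ setN G I)ᶜ))) : IsEgervary G := by
  classical
  intro hcover
  obtain ⟨M, k, u, C, hk, hM, hCyc, hdisjC, hMC, hcov⟩ := hcover
  set S : Set V := (I ∪ setN G I)ᶜ with hS
  set N : Set V := setN G I with hN
  -- the cover adjacency relation
  set Rel : V → V → Prop := fun a b => M.Adj a b ∨ ∃ i, (C i).toSubgraph.Adj a b with hRel
  have hRelSymm : ∀ {a b}, Rel a b → Rel b a := by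
    rintro a b (h | ⟨i, h⟩)
    · exact Or.inl h.symm
    · exact Or.inr ⟨i, h.symm⟩
  have hRelG : ∀ {a b}, Rel a b → G.Adj a b := by
    rintro a b (h | ⟨i, h⟩)
    · exact M.adj_sub h
    · exact (C i).toSubgraph.adj_sub h
  -- the partner function
  set pt : V → V := fun a => if h : a ∈ M.verts then (hM h).choose else a with hpt
  have hpt1 : ∀ a (_ : a ∈ M.verts), M.Adj a (pt a) := by
    intro a ha
    simp only [hpt, dif_pos ha]
    exact (hM ha).choose_spec.1
  have hpt2 : ∀ a b, M.Adj a b → pt a = b := by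
    intro a b hab
    have ha : a ∈ M.verts := M.edge_vert hab
    simp only [hpt, dif_pos ha]
    exact ((hM ha).choose_spec.2 b hab).symm
  have hpt3 : ∀ a (_ : a ∈ M.verts), pt (pt a) = a := fun a ha =>
    hpt2 _ _ (hpt1 a ha).symm
  have hptv : ∀ a (_ : a ∈ M.verts), pt a ∈ M.verts := fun a ha =>
    M.edge_vert (hpt1 a ha).symm
  have hsupv : ∀ i x y, (C i).toSubgraph.Adj x y → x ∈ (C i).support := by
    intro i x y hxy
    have := hxy.fst_mem
    rwa [SimpleGraph.Walk.verts_toSubgraph] at this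
  have hRelM : ∀ {a b}, a ∈ M.verts → (Rel a b ↔ b = pt a) := by
    intro a b ha
    constructor
    · rintro (h | ⟨i, h⟩)
      · exact (hpt2 a b h).symm
      · exact absurd ha (hMC i a (hsupv i a _ h))
    · rintro rfl
      exact Or.inl (hpt1 a ha)
  have hRelC : ∀ {a}, a ∉ M.verts → ∀ i, a ∈ (C i).support →
      {b | Rel a b} = (C i).toSubgraph.neighborSet a := by
    intro a ha i hi
    ext b
    simp only [Set.mem_setOf_eq, SimpleGraph.Subgraph.mem_neighborSet]
    constructor
    · rintro (h | ⟨j, h⟩)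
      · exact absurd (M.edge_vert h) ha
      · by_cases hij : i = j
        · exact hij ▸ h
        · exact absurd (hsupv j a _ h) (hdisjC j i (fun hji => hij hji.symm) a · hi)
    · intro h
      exact Or.inr ⟨i, h⟩
  have hdeg2 : ∀ {a}, a ∉ M.verts → ∃ i, a ∈ (C i).support ∧ {b | Rel a b}.ncard = 2 := by
    intro a ha
    rcases hcov a with h | ⟨i, hi⟩
    · exact absurd h ha
    · exact ⟨i, hi, by rw [hRelC ha i hi]; exact cycle_nbrs_ncard (hCyc i).1 hi⟩
  have hIN : ∀ a ∈ I, ∀ b, Rel a b → b ∈ N := by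
    intro a ha b hab
    have hadj := hRelG hab
    have hbI : b ∉ I := fun hbI => hind a ha b hbI hadj
    exact ⟨hbI, a, ha, hadj.symm⟩
  have hNI : Disjoint I N := by
    rw [Set.disjoint_left]
    intro x hxI hxN
    exact hxN.1 hxI
  -- Finset counting setup
  set IF : Finset V := Finset.univ.filter (· ∈ I) with hIF
  set NF : Finset V := Finset.univ.filter (· ∈ N) with hNF
  have hIFcoe : (↑IF : Set V) = I := by ext x; simp [hIF]
  have hNFcoe : (↑NF : Set V) = N := by ext x; simp [hNF]
  have hIFNF : IF.card = NF.card := by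
    rw [← Set.ncard_coe_finset IF, ← Set.ncard_coe_finset NF, hIFcoe, hNFcoe]
    exact hcard
  set dI : V → ℕ := fun a => (Finset.univ.filter (fun b => b ∈ N ∧ Rel a b)).card with hdI
  set dN : V → ℕ := fun z => (Finset.univ.filter (fun a => a ∈ I ∧ Rel a z)).card with hdN
  set PF : Finset (V × V) :=
    Finset.univ.filter (fun p => p.1 ∈ I ∧ p.2 ∈ N ∧ Rel p.1 p.2) with hPF
  have count1 : PF.card = ∑ a ∈ IF, dI a := by
    rw [Finset.card_eq_sum_card_fiberwise (f := Prod.fst) (t := IF)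
      (by intro p hp; simp only [hPF, Finset.mem_coe, Finset.mem_filter, Finset.mem_univ, true_and] at hp
          simp [hIF, hp.1])]
    refine Finset.sum_congr rfl ?_
    intro a ha
    have haI : a ∈ I := by simpa [hIF] using ha
    refine Finset.card_bij (fun p _ => p.2) ?_ ?_ ?_
    · intro p hp
      simp only [hPF, Finset.mem_filter, Finset.mem_univ, true_and] at hp ⊢
      obtain ⟨⟨h1, h2, h3⟩, h4⟩ := hp
      exact ⟨h2, h4 ▸ h3⟩
    · intro p hp q hq hpq
      simp only [hPF, Finset.mem_filter] at hp hq
      exact Prod.ext (hp.2.trans hq.2.symm) hpq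
    · intro b hb
      simp only [Finset.mem_filter, Finset.mem_univ, true_and] at hb
      exact ⟨(a, b), by simp [hPF, haI, hb.1, hb.2], rfl⟩
  have count2 : PF.card = ∑ z ∈ NF, dN z := by
    rw [Finset.card_eq_sum_card_fiberwise (f := Prod.snd) (t := NF)
      (by intro p hp; simp only [hPF, Finset.mem_coe, Finset.mem_filter, Finset.mem_univ, true_and] at hp
          simp [hNF, hp.2.1])]
    refine Finset.sum_congr rfl ?_
    intro z hz
    have hzN : z ∈ N := by simpa [hNF] using hz
    refine Finset.card_bij (fun p _ => p.1) ?_ ?_ ?_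
    · intro p hp
      simp only [hPF, Finset.mem_filter, Finset.mem_univ, true_and] at hp ⊢
      obtain ⟨⟨h1, h2, h3⟩, h4⟩ := hp
      exact ⟨h1, h4 ▸ h3⟩
    · intro p hp q hq hpq
      simp only [hPF, Finset.mem_filter] at hp hq
      exact Prod.ext hpq (hp.2.trans hq.2.symm)
    · intro a hb
      simp only [Finset.mem_filter, Finset.mem_univ, true_and] at hb
      exact ⟨(a, z), by simp [hPF, hzN, hb.1, hb.2, hIN a hb.1 z hb.2], rfl⟩
  set ImF : Finset V := IF.filter (· ∈ M.verts) with hImF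
  set IcF : Finset V := IF.filter (fun a => a ∉ M.verts) with hIcF
  set NmF : Finset V := NF.filter (· ∈ M.verts) with hNmF
  set NcF : Finset V := NF.filter (fun a => a ∉ M.verts) with hNcF
  have hIsplit : ImF.card + IcF.card = IF.card :=
    Finset.card_filter_add_card_filter_not (fun a => a ∈ M.verts)
  have hNsplit : NmF.card + NcF.card = NF.card :=
    Finset.card_filter_add_card_filter_not (fun a => a ∈ M.verts)
  have hdIm : ∀ a ∈ ImF, dI a = 1 := by
    intro a ha
    simp only [hImF, Finset.mem_filter] at ha
    obtain ⟨haI, ham⟩ := ha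
    have haI' : a ∈ I := by simpa [hIF] using haI
    have : Finset.univ.filter (fun b => b ∈ N ∧ Rel a b) = {pt a} := by
      ext b
      simp only [Finset.mem_filter, Finset.mem_univ, true_and, Finset.mem_singleton]
      constructor
      · intro hb
        exact (hRelM ham).mp hb.2
      · rintro rfl
        exact ⟨hIN a haI' (pt a) (Or.inl (hpt1 a ham)), (hRelM ham).mpr rfl⟩
    rw [hdI]
    simp only [this, Finset.card_singleton]
  have hdIc : ∀ a ∈ IcF, dI a = 2 := by
    intro a ha
    simp only [hIcF, Finset.mem_filter] at ha
    obtain ⟨haI, ham⟩ := ha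
    have haI' : a ∈ I := by simpa [hIF] using haI
    obtain ⟨i, hi, hn⟩ := hdeg2 ham
    have hset : (↑(Finset.univ.filter (fun b => b ∈ N ∧ Rel a b)) : Set V)
        = {b | Rel a b} := by
      ext b
      simp only [Finset.coe_filter, Finset.mem_univ, true_and, Set.mem_setOf_eq]
      exact ⟨fun h => h.2, fun h => ⟨hIN a haI' b h, h⟩⟩
    rw [hdI]
    simp only [← Set.ncard_coe_finset, hset, hn]
  have sumI : ∑ a ∈ IF, dI a = ImF.card + 2 * IcF.card := by
    rw [← Finset.sum_filter_add_sum_filter_not IF (fun a => a ∈ M.verts) dI]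
    rw [Finset.sum_congr rfl hdIm, Finset.sum_congr rfl hdIc]
    simp [Finset.sum_const, mul_comm]
  have hNmI : ∀ z ∈ NmF, z ∈ N ∧ z ∈ M.verts := by
    intro z hz
    simp only [hNmF, Finset.mem_filter] at hz
    exact ⟨by simpa [hNF] using hz.1, hz.2⟩
  have hdNmSet : ∀ z ∈ NmF, Finset.univ.filter (fun a => a ∈ I ∧ Rel a z)
      = if pt z ∈ I then {pt z} else ∅ := by
    intro z hz
    obtain ⟨hzN, hzm⟩ := hNmI z hz
    ext a
    simp only [Finset.mem_filter, Finset.mem_univ, true_and]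
    by_cases hptI : pt z ∈ I
    · simp only [if_pos hptI, Finset.mem_singleton]
      constructor
      · intro ⟨_, har⟩
        exact (hRelM hzm).mp (hRelSymm har)
      · rintro rfl
        exact ⟨hptI, hRelSymm ((hRelM hzm).mpr rfl)⟩
    · simp only [if_neg hptI, Finset.notMem_empty, iff_false]
      intro ⟨haI, har⟩
      exact hptI (((hRelM hzm).mp (hRelSymm har)) ▸ haI)
  have sumNm : ∑ z ∈ NmF, dN z = (NmF.filter (fun z => pt z ∈ I)).card := by
    rw [← Finset.sum_filter_add_sum_filter_not NmF (fun z => pt z ∈ I) dN]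
    have h1 : ∀ z ∈ NmF.filter (fun z => pt z ∈ I), dN z = 1 := by
      intro z hz
      have hz' := Finset.mem_of_mem_filter z hz
      have hptI : pt z ∈ I := (Finset.mem_filter.mp hz).2
      rw [hdN]
      simp only [hdNmSet z hz', if_pos hptI, Finset.card_singleton]
    have h2 : ∀ z ∈ NmF.filter (fun z => pt z ∉ I), dN z = 0 := by
      intro z hz
      have hz' := Finset.mem_of_mem_filter z hz
      have hptI : pt z ∉ I := (Finset.mem_filter.mp hz).2
      rw [hdN]
      simp only [hdNmSet z hz', if_neg hptI, Finset.card_empty]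
    rw [Finset.sum_congr rfl h1, Finset.sum_congr rfl h2]
    simp
  have hImNm : ImF.card = (NmF.filter (fun z => pt z ∈ I)).card := by
    refine Finset.card_bij (fun a _ => pt a) ?_ ?_ ?_
    · intro a ha
      simp only [hImF, Finset.mem_filter] at ha
      have haI : a ∈ I := by simpa [hIF] using ha.1
      have h1 : pt a ∈ N := hIN a haI (pt a) (Or.inl (hpt1 a ha.2))
      refine Finset.mem_filter.mpr ⟨Finset.mem_filter.mpr ⟨by simp [hNF, h1], hptv a ha.2⟩, ?_⟩
      rw [hpt3 a ha.2]
      exact haI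
    · intro a ha b hb hab
      simp only [hImF, Finset.mem_filter] at ha hb
      have := congrArg pt hab
      rwa [hpt3 a ha.2, hpt3 b hb.2] at this
    · intro z hz
      simp only [Finset.mem_filter, hNmF] at hz
      obtain ⟨⟨hzN, hzm⟩, hptI⟩ := hz
      refine ⟨pt z, ?_, hpt3 z hzm⟩
      simp only [hImF, Finset.mem_filter, hIF, Finset.mem_univ, true_and]
      exact ⟨hptI, hptv z hzm⟩
  have hdNc2 : ∀ z ∈ NcF, dN z ≤ 2 := by
    intro z hz
    simp only [hNcF, Finset.mem_filter] at hz
    obtain ⟨hzN, hzm⟩ := hz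
    obtain ⟨i, hi, hn⟩ := hdeg2 hzm
    have hsub : (↑(Finset.univ.filter (fun a => a ∈ I ∧ Rel a z)) : Set V)
        ⊆ {b | Rel z b} := by
      intro a ha
      simp only [Finset.coe_filter, Finset.mem_univ, true_and, Set.mem_setOf_eq] at ha ⊢
      exact hRelSymm ha.2
    have := Set.ncard_le_ncard hsub (Set.toFinite _)
    rw [Set.ncard_coe_finset, hn] at this
    exact this
  have hNcle : ∑ z ∈ NcF, dN z ≤ 2 * NcF.card := by
    calc ∑ z ∈ NcF, dN z ≤ ∑ _z ∈ NcF, 2 := Finset.sum_le_sum hdNc2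
    _ = 2 * NcF.card := by simp [mul_comm]
  have hImleNm : ImF.card ≤ NmF.card := by
    rw [hImNm]
    exact Finset.card_le_card (Finset.filter_subset _ _)
  have keyEq : ImF.card + 2 * IcF.card = ImF.card + ∑ z ∈ NcF, dN z := by
    rw [← sumI, ← count1, count2,
      ← Finset.sum_filter_add_sum_filter_not NF (fun a => a ∈ M.verts) dN, sumNm, ← hImNm]
  have hsumNc : ∑ z ∈ NcF, dN z = 2 * IcF.card := by omega
  have hcardIcNc : IcF.card = NcF.card ∧ ImF.card = NmF.card := by omega
  have hdNc2' : ∀ z ∈ NcF, dN z = 2 := by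
    by_contra hcon
    push_neg at hcon
    obtain ⟨z0, hz0, hz0ne⟩ := hcon
    have : ∑ z ∈ NcF, dN z < ∑ _z ∈ NcF, 2 :=
      Finset.sum_lt_sum hdNc2 ⟨z0, hz0, lt_of_le_of_ne (hdNc2 z0 hz0) hz0ne⟩
    rw [Finset.sum_const, smul_eq_mul, mul_comm] at this
    omega
  have forcing1 : ∀ z, z ∈ N → z ∉ M.verts → ∀ b, Rel z b → b ∈ I := by
    intro z hzN hzm b hzb
    have hzNc : z ∈ NcF := by simp [hNcF, hNF, hzN, hzm]
    obtain ⟨i, hi, hn⟩ := hdeg2 hzm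
    have hsub : (↑(Finset.univ.filter (fun a => a ∈ I ∧ Rel a z)) : Set V)
        ⊆ {b | Rel z b} := by
      intro a ha
      simp only [Finset.coe_filter, Finset.mem_univ, true_and, Set.mem_setOf_eq] at ha ⊢
      exact hRelSymm ha.2
    have hcards : {b | Rel z b}.ncard ≤
        (↑(Finset.univ.filter (fun a => a ∈ I ∧ Rel a z)) : Set V).ncard := by
      rw [Set.ncard_coe_finset, hn]
      have h2 := hdNc2' z hzNc
      simp only [hdN] at h2
      omega
    have heq := Set.eq_of_subset_of_ncard_le hsub hcards (Set.toFinite _)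
    have : b ∈ (↑(Finset.univ.filter (fun a => a ∈ I ∧ Rel a z)) : Set V) := by
      rw [heq]
      exact hzb
    simp only [Finset.coe_filter, Finset.mem_univ, true_and, Set.mem_setOf_eq] at this
    exact this.1
  have forcing2 : ∀ z, z ∈ N → z ∈ M.verts → pt z ∈ I := by
    intro z hzN hzm
    have hfe : NmF.filter (fun z => pt z ∈ I) = NmF := by
      apply Finset.eq_of_subset_of_card_le (Finset.filter_subset _ _)
      rw [← hImNm]
      omega
    have hzNm : z ∈ NmF := by simp [hNmF, hNF, hzN, hzm]
    rw [← hfe] at hzNm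
    exact (Finset.mem_filter.mp hzNm).2
  -- no cycle touches I ∪ N
  have havoid : ∀ i, ∀ x ∈ (C i).support, x ∉ I ∪ N := by
    intro i x0 hx0 hx0IN
    set c' : G.Walk x0 x0 := (C i).rotate x0 hx0 with hc'def
    have hc'cyc : c'.IsCycle := (hCyc i).1.rotate hx0
    have hc'len : c'.length = (C i).length := length_rotate (C i) hx0
    have hc'odd : Odd c'.length := hc'len ▸ (hCyc i).2
    have hc'sub : c'.toSubgraph = (C i).toSubgraph :=
      SimpleGraph.Walk.toSubgraph_rotate (C i) hx0
    have hc'supp : ∀ y, y ∈ c'.support → y ∈ (C i).support := fun y hy =>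
      mem_support_rotate (C i) hx0 hy
    have key : ∀ n, n ≤ c'.length →
        (c'.getVert n ∈ I ∪ N) ∧ (c'.getVert n ∈ I ↔ (x0 ∈ I ↔ Even n)) := by
      intro n
      induction n with
      | zero =>
        intro _
        refine ⟨by simpa using hx0IN, ?_⟩
        simp only [SimpleGraph.Walk.getVert_zero, Even.zero, iff_true]
      | succ n ih =>
        intro hle
        have hlt : n < c'.length := by omega
        obtain ⟨hyIN, hypar⟩ := ih (by omega)
        have hadj : (C i).toSubgraph.Adj (c'.getVert n) (c'.getVert (n + 1)) := by
          rw [← hc'sub]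
          exact SimpleGraph.Walk.toSubgraph_adj_getVert c' hlt
        have hrel : Rel (c'.getVert n) (c'.getVert (n + 1)) := Or.inr ⟨i, hadj⟩
        have hysup : c'.getVert n ∈ (C i).support := hc'supp _
          (SimpleGraph.Walk.mem_support_iff_exists_getVert.mpr ⟨n, rfl, by omega⟩)
        rcases hyIN with hyI | hyN
        · have hy'N : c'.getVert (n + 1) ∈ N := hIN _ hyI _ hrel
          have hy'nI : c'.getVert (n + 1) ∉ I := fun h =>
            (Set.disjoint_left.mp hNI h) hy'N
          refine ⟨Or.inr hy'N, ?_⟩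
          have hx0even : x0 ∈ I ↔ Even n := hypar.mp hyI
          rw [Nat.even_add_one]
          tauto
        · have hynM : c'.getVert n ∉ M.verts := hMC i _ hysup
          have hy'I : c'.getVert (n + 1) ∈ I := forcing1 _ hyN hynM _ hrel
          have hynI : c'.getVert n ∉ I := fun h => (Set.disjoint_left.mp hNI h) hyN
          refine ⟨Or.inl hy'I, ?_⟩
          have hnpar : ¬ (x0 ∈ I ↔ Even n) := fun h => hynI (hypar.mpr h)
          rw [Nat.even_add_one]
          tauto
    obtain ⟨-, hfin⟩ := key c'.length le_rfl
    rw [SimpleGraph.Walk.getVert_length] at hfin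
    have hne : ¬ Even c'.length := by
      rcases hc'odd with ⟨m, hm⟩
      rintro ⟨l, hl⟩
      omega
    tauto
  -- lift everything to the induced graph on S
  have hCS : ∀ i, ∀ x ∈ (C i).support, x ∈ S := by
    intro i x hx
    rw [hS]
    exact Set.mem_compl (havoid i x hx)
  have hMS : ∀ a, a ∈ M.verts → a ∈ S → pt a ∈ S := by
    intro a ham haS
    rw [hS, Set.mem_compl_iff]
    rintro (hptI | hptN)
    · have : a ∈ N := hIN (pt a) hptI a (hRelSymm (Or.inl (hpt1 a ham)))
      rw [hS, Set.mem_compl_iff] at haS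
      exact haS (Or.inr this)
    · have h2 := forcing2 (pt a) hptN (hptv a ham)
      rw [hpt3 a ham] at h2
      rw [hS, Set.mem_compl_iff] at haS
      exact haS (Or.inl h2)
  apply hEg
  refine ⟨{ verts := {x : ↥S | ↑x ∈ M.verts},
            Adj := fun a b => M.Adj ↑a ↑b,
            adj_sub := fun h => M.adj_sub h,
            edge_vert := fun h => M.edge_vert h,
            symm := ⟨fun a b h => M.adj_symm h⟩ }, k,
          fun i => ⟨u i, hCS i (u i) (C i).start_mem_support⟩,
          fun i => liftW (C i) (hCS i), hk, ?_, ?_, ?_, ?_, ?_⟩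
  · rintro ⟨a, haS⟩ ham
    simp only [Set.mem_setOf_eq] at ham
    refine ⟨⟨pt a, hMS a ham haS⟩, hpt1 a ham, ?_⟩
    rintro ⟨b, hbS⟩ hb
    exact Subtype.ext ((hpt2 a b hb).symm)
  · intro i
    exact ⟨liftW_isCycle (C i) (hCS i) (hCyc i).1,
      by rw [liftW_length]; exact (hCyc i).2⟩
  · intro i j hij x hxi hxj
    rw [liftW_support] at hxi hxj
    exact hdisjC i j hij ↑x hxi hxj
  · intro i x hx
    rw [liftW_support] at hx
    intro hxM
    exact hMC i ↑x hx hxM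
  · intro x
    rcases hcov ↑x with h | ⟨i, h⟩
    · exact Or.inl h
    · exact Or.inr ⟨i, (liftW_support (C i) (hCS i) x).mpr h⟩

end Parts

/-- For a critical independent set `I` with `|I| = |N(I)|`: if `G - I - N(I)` contains a
nice even subdivision of `T`, then `G` is not Egerváry; conversely, if `G - I - N(I)` is
Egerváry and `G` has a perfect matching matching `I` into `N(I)`, then `G` is Egerváry. -/
theorem critical_indep_egervary {V : Type*} [Fintype V] (G : SimpleGraph V) (I : Set V)
    (hind : IsIndep G I)
    (hcrit : ∀ J : Set V, IsIndep G J →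
      ((setN G I).ncard : ℤ) - I.ncard ≤ ((setN G J).ncard : ℤ) - J.ncard)
    (hcard : I.ncard = (setN G I).ncard) :
    (HasNiceEvenSubdivT (G.induce ((I ∪ setN G I)ᶜ)) → ¬ IsEgervary G) ∧
    ((∃ M : G.Subgraph, M.IsPerfectMatching ∧ ∀ x ∈ I, ∀ y : V, M.Adj x y → y ∈ setN G I) →
      IsEgervary (G.induce ((I ∪ setN G I)ᶜ)) → IsEgervary G) :=
  ⟨fun hT hEg => hEg (part_one G I hind hcrit hcard hT),
   fun _ hEg' => part_two G I hind hcard hEg'⟩
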